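/- Fix constants C_C > 0, C_{C1} > 0, C_{C2} > 0, e1 ∈ [0,1), and p1 ∈ [0,1), p4 ∈ [0,1]. Define A(e2) = ((1 − e1)·C_C + (1 − e1)·C_{C1} − (1 − e2)·C_{C2} − e2·(1 − e1)·C_C)/(1 − e2) and S_C(e2) = ((1 − p1)·A(e2) + p4·C_C)/(1 − p1 + p4). Then for every e2 ∈ [0,1) the derivative of S_C with respect to e2 equals ((1 − p1)/(1 − p1 + p4))·(1 − e1)·C_{C1}/(1 − e2)^2, which is strictly positive; consequently S_C is strictly increasing in the noise e2 on [0,1). (Theorem 3, second part.) -/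

import Mathlib

/-- Theorem 3 (second part): the pinned payoff `S_C` is strictly increasing in the
noise `e2` on `[0,1)`, with derivative
`((1-p1)/(1-p1+p4))·(1-e1)·C_{C1}/(1-e2)^2`. -/
theorem pinned_payoff_increasing_in_e2
    (CC CC1 CC2 e1 p1 p4 : ℝ)
    (hCC : 0 < CC) (hCC1 : 0 < CC1) (hCC2 : 0 < CC2)
    (he1 : 0 ≤ e1 ∧ e1 < 1) (hp1 : 0 ≤ p1 ∧ p1 < 1) (hp4 : 0 ≤ p4 ∧ p4 ≤ 1)
    (A : ℝ → ℝ)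
    (hA : ∀ e2, A e2 = ((1 - e1) * CC + (1 - e1) * CC1 - (1 - e2) * CC2
        - e2 * ((1 - e1) * CC)) / (1 - e2))
    (S : ℝ → ℝ)
    (hS : ∀ e2, S e2 = ((1 - p1) * A e2 + p4 * CC) / (1 - p1 + p4)) :
    (∀ e2 : ℝ, 0 ≤ e2 → e2 < 1 →
      HasDerivAt S (((1 - p1) / (1 - p1 + p4)) * ((1 - e1) * CC1 / (1 - e2) ^ 2)) e2 ∧
      0 < ((1 - p1) / (1 - p1 + p4)) * ((1 - e1) * CC1 / (1 - e2) ^ 2)) ∧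
    StrictMonoOn S (Set.Ico (0 : ℝ) 1) := by
  have hp1' : 0 < 1 - p1 := by linarith [hp1.2]
  have hden : 0 < 1 - p1 + p4 := by linarith [hp4.1]
  have he1' : 0 < 1 - e1 := by linarith [he1.2]
  have key : ∀ e2 : ℝ, e2 < 1 →
      HasDerivAt S (((1 - p1) / (1 - p1 + p4)) * ((1 - e1) * CC1 / (1 - e2) ^ 2)) e2 := by
    intro e2 he2
    have h2 : (0 : ℝ) < 1 - e2 := by linarith
    have hSfun : S = fun x => ((1 - p1) * (((1 - e1) * CC + (1 - e1) * CC1 - (1 - x) * CC2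
        - x * ((1 - e1) * CC)) / (1 - x)) + p4 * CC) / (1 - p1 + p4) := by
      funext x; rw [hS x, hA x]
    rw [hSfun]
    have hN : HasDerivAt (fun x : ℝ => (1 - e1) * CC + (1 - e1) * CC1 - (1 - x) * CC2
        - x * ((1 - e1) * CC)) (CC2 - (1 - e1) * CC) e2 := by
      have h := (((hasDerivAt_const e2 ((1-e1)*CC)).add (hasDerivAt_const e2 ((1-e1)*CC1))).sub
          (((hasDerivAt_const e2 (1:ℝ)).sub (hasDerivAt_id e2)).mul
            (hasDerivAt_const e2 CC2))).sub ((hasDerivAt_id e2).mul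
            (hasDerivAt_const e2 ((1-e1)*CC)))
      simp only [id_eq] at h
      exact h.congr_deriv (by ring)
    have hD : HasDerivAt (fun x : ℝ => 1 - x) (-1) e2 := by
      simpa using (hasDerivAt_id e2).const_sub (1:ℝ)
    have hQ := hN.div hD (by linarith : (1:ℝ) - e2 ≠ 0)
    have := ((hQ.const_mul (1 - p1)).add_const (p4 * CC)).div_const (1 - p1 + p4)
    refine this.congr_deriv ?_
    field_simp
    ring
  constructor
  · intro e2 _ he2
    refine ⟨key e2 he2, ?_⟩
    have h2 : (0 : ℝ) < 1 - e2 := by linarith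
    positivity
  · apply strictMonoOn_of_deriv_pos (convex_Ico 0 1)
    · intro x hx
      exact (key x hx.2).continuousAt.continuousWithinAt
    · intro x hx
      rw [interior_Ico] at hx
      rw [(key x hx.2).deriv]
      have h2 : (0 : ℝ) < 1 - x := by linarith [hx.2]
      positivity
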